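/- Let S be a stochastic flow on a Polish space (X,d) over (Ω,𝓕,ℙ), and let A(t,ω) ⊆ X, t ∈ ℝ, ω ∈ Ω, be a compact forward invariant family: there is a full-measure set Ω₀ ∈ 𝓕 such that (a) for each x ∈ X and t ∈ ℝ the map ω ↦ d(x, A(t,ω)) is Borel measurable; (b) for each ω ∈ Ω₀ and t ∈ ℝ the set A(t,ω) is nonempty and compact; (c) for each ω ∈ Ω₀ and s ≤ t, S(t,s;ω)A(s,ω) ⊆ A(t,ω). Then there exists an evolution system of measures {μ_t}_{t∈ℝ} for S which is supported by A, i.e. for each t ∈ ℝ, the disintegration satisfies μ_{tω}(A(t,ω)) = 1 for ℙ-a.e. ω. -/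

import Mathlib

open MeasureTheory Filter Topology

/-- A stochastic flow on a metric space `X` over a probability space `(Ω, 𝓕, ℙ)`:
a family of maps `S t s ω : X → X` (for `s ≤ t`) satisfying, for `ℙ`-a.e. `ω`,
the cocycle property, continuity in `x`, the identity at equal times, and a joint
measurability condition in `(s, ω)` on `(-∞, t] × Ω`. -/
def IsStochasticFlow {Ω X : Type*} [MeasurableSpace Ω] [MetricSpace X]
    [MeasurableSpace X] [BorelSpace X]
    (ℙ : Measure Ω) (S : ℝ → ℝ → Ω → X → X) : Prop :=
  (∀ᵐ ω ∂ℙ,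
    (∀ s r t : ℝ, s ≤ r → r ≤ t → ∀ x : X, S t r ω (S r s ω x) = S t s ω x) ∧
    (∀ s t : ℝ, s ≤ t → Continuous fun x : X => S t s ω x) ∧
    (∀ t : ℝ, ∀ x : X, S t t ω x = x)) ∧
  (∀ t : ℝ, ∀ x : X, Measurable fun p : {s : ℝ // s ≤ t} × Ω => S t p.1.1 p.2 x)

/-- `K` is an attracting set at time `t` for the sample point `ω`: every nonempty
bounded set `B` satisfies `d(S(t,s;ω)B, K) → 0` as `s → -∞`, where
`d(A,B) = sup_{x ∈ A} inf_{y ∈ B} d(x,y)` (formulated with `EMetric.infEdist`). -/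
def Attracts {Ω X : Type*} [MetricSpace X]
    (S : ℝ → ℝ → Ω → X → X) (t : ℝ) (ω : Ω) (K : Set X) : Prop :=
  ∀ B : Set X, B.Nonempty → Bornology.IsBounded B →
    Tendsto (fun s : ℝ => ⨆ x ∈ B, EMetric.infEdist (S t s ω x) K) atBot (𝓝 0)

/-- The stochastic flow `S` is asymptotically compact with compact attracting sets `K t ω`
on a full-measure set `Ω₀`. -/
def IsAsymptoticallyCompact {Ω X : Type*} [MeasurableSpace Ω] [MetricSpace X]
    (ℙ : Measure Ω) (S : ℝ → ℝ → Ω → X → X) : Prop :=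
  ∃ Ω₀ : Set Ω, MeasurableSet Ω₀ ∧ ℙ Ω₀ = 1 ∧
    ∀ ω ∈ Ω₀, ∀ t : ℝ, ∃ K : Set X, IsCompact K ∧ Attracts S t ω K

/-- An evolution system of measures for the stochastic flow `S`: a family of probability
measures `μ t` on `Ω × X` with marginal `ℙ` on `Ω`, such that the image of `μ s` under
`(ω, x) ↦ (ω, S t s ω x)` is `μ t` whenever `s ≤ t`. -/
def IsEvolutionSystem {Ω X : Type*} [MeasurableSpace Ω] [MeasurableSpace X]
    (ℙ : Measure Ω) (S : ℝ → ℝ → Ω → X → X) (μ : ℝ → Measure (Ω × X)) : Prop :=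
  (∀ t : ℝ, IsProbabilityMeasure (μ t)) ∧
  (∀ t : ℝ, (μ t).map Prod.fst = ℙ) ∧
  (∀ s t : ℝ, s ≤ t → (μ s).map (fun p : Ω × X => (p.1, S t s p.1 p.2)) = μ t)

open EMetric ENNReal

theorem krn_selection {α E : Type*} [MeasurableSpace α] [MetricSpace E]
    [TopologicalSpace.SeparableSpace E] [CompleteSpace E] [MeasurableSpace E] [BorelSpace E]
    [Nonempty E]
    {F : α → Set E} (hcl : ∀ ω, IsClosed (F ω))
    (hm : ∀ x : E, Measurable fun ω => infEdist x (F ω))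
    (v : α → E) (hv : Measurable v) (r : α → ℝ≥0∞) (hr : Measurable r)
    (hlt : ∀ ω, infEdist (v ω) (F ω) < r ω) (hrT : ∀ ω, r ω ≠ ⊤) :
    ∃ g : α → E, Measurable g ∧ ∀ ω, g ω ∈ F ω ∧ edist (g ω) (v ω) ≤ 4 * r ω := by
  classical
  set e : ℕ → E := TopologicalSpace.denseSeq E with he
  have hde : DenseRange e := TopologicalSpace.denseRange_denseSeq E
  have hrpos : ∀ ω, 0 < r ω := fun ω => lt_of_le_of_lt zero_le (hlt ω)
  -- the one-step predicate
  let Q : ℕ → (α → E) → α → ℕ → Prop := fun m w ω k =>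
    infEdist (e k) (F ω) < 2⁻¹ ^ (m + 1) * r ω ∧
      edist (e k) (w ω) < 2⁻¹ ^ (m + 1) * r ω + 2⁻¹ ^ m * r ω
  have htot : ∀ (m : ℕ) (w : α → E) (ω : α), ∃ k, Q m w ω k ∨ ¬ ∃ j, Q m w ω j := by
    intro m w ω
    by_cases h : ∃ j, Q m w ω j
    · obtain ⟨j, hj⟩ := h; exact ⟨j, Or.inl hj⟩
    · exact ⟨0, Or.inr h⟩
  let u : ℕ → α → E := fun m =>
    Nat.rec v (fun m w => fun ω => e (Nat.find (htot m w ω))) m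
  have hu0 : u 0 = v := rfl
  have huS : ∀ m, u (m + 1) = fun ω => e (Nat.find (htot m (u m) ω)) := fun m => rfl
  -- measurability of the Q-sets
  have hQm : ∀ (m : ℕ) (w : α → E), Measurable w → ∀ k, MeasurableSet {ω | Q m w ω k} := by
    intro m w hw k
    have h1 : Measurable fun ω => infEdist (e k) (F ω) := hm (e k)
    have h2 : Measurable fun ω => (2⁻¹ : ℝ≥0∞) ^ (m + 1) * r ω := measurable_const.mul hr
    have h3 : Measurable fun ω => edist (e k) (w ω) :=
      (continuous_const.edist continuous_id).measurable.comp hw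
    have h4 : Measurable fun ω => 2⁻¹ ^ (m + 1) * r ω + 2⁻¹ ^ m * r ω :=
      (measurable_const.mul hr).add (measurable_const.mul hr)
    have hA := measurableSet_lt h1 h2
    have hB := measurableSet_lt h3 h4
    exact hA.inter hB
  have hum : ∀ m, Measurable (u m) := by
    intro m
    induction m with
    | zero => exact hv
    | succ m ih =>
      rw [huS m]
      refine Measurable.find (fun k => measurable_const) (fun k => ?_) (fun ω => htot m (u m) ω)
      have h2 : MeasurableSet {ω | ¬∃ j, Q m (u m) ω j} := by
        rw [show {ω | ¬∃ j, Q m (u m) ω j} = (⋃ j, {ω | Q m (u m) ω j})ᶜ by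
          ext ω; simp]
        exact (MeasurableSet.iUnion fun j => hQm m (u m) ih j).compl
      rw [Set.setOf_or]
      exact (hQm m (u m) ih k).union h2
  -- existence of a good index, given the invariant
  have hex : ∀ (m : ℕ) (ω : α), infEdist (u m ω) (F ω) < 2⁻¹ ^ m * r ω →
      ∃ j, Q m (u m) ω j := by
    intro m ω h
    obtain ⟨y, hyF, hy⟩ := infEdist_lt_iff.1 h
    have hδ : (0 : ℝ≥0∞) < 2⁻¹ ^ (m + 1) * r ω := by
      exact ENNReal.mul_pos (pow_ne_zero _ (by simp)) (hrpos ω).ne'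
    obtain ⟨z, hz, hez⟩ := EMetric.mem_closure_iff.1 (hde y) (2⁻¹ ^ (m + 1) * r ω) hδ
    obtain ⟨j, rfl⟩ := hz
    refine ⟨j, ?_, ?_⟩
    · exact lt_of_le_of_lt (infEdist_le_edist_of_mem hyF) (by rwa [edist_comm])
    · calc edist (e j) (u m ω) ≤ edist (e j) y + edist y (u m ω) := edist_triangle _ _ _
        _ < 2⁻¹ ^ (m + 1) * r ω + 2⁻¹ ^ m * r ω := by
            apply ENNReal.add_lt_add
            · rwa [edist_comm]
            · rwa [edist_comm]
  -- the invariant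
  have hinv : ∀ (m : ℕ) (ω : α), infEdist (u m ω) (F ω) < 2⁻¹ ^ m * r ω := by
    intro m
    induction m with
    | zero => intro ω; show infEdist (v ω) (F ω) < 2⁻¹ ^ 0 * r ω; simpa using hlt ω
    | succ m ih =>
      intro ω
      have hfind := Nat.find_spec (htot m (u m) ω)
      rcases hfind with h | h
      · rw [huS m]; exact h.1
      · exact absurd (hex m ω (ih ω)) h
  -- step bound
  have hstep : ∀ (m : ℕ) (ω : α), edist (u m ω) (u (m + 1) ω) ≤ 2 * r ω * 2⁻¹ ^ m := by
    intro m ω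
    have hfind := Nat.find_spec (htot m (u m) ω)
    rcases hfind with h | h
    · have h2 := h.2
      rw [huS m, edist_comm]
      calc edist (e (Nat.find (htot m (u m) ω))) (u m ω)
          ≤ 2⁻¹ ^ (m + 1) * r ω + 2⁻¹ ^ m * r ω := le_of_lt h2
        _ ≤ 2⁻¹ ^ m * r ω + 2⁻¹ ^ m * r ω := by
            refine add_le_add_left (mul_le_mul_left ?_ (r ω)) _
            rw [pow_succ]
            exact mul_le_of_le_one_right zero_le (by norm_num)
        _ = 2 * r ω * 2⁻¹ ^ m := by ring
    · exact absurd (hex m ω (hinv m ω)) h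
  -- Cauchy and limit
  have h2inv : (2⁻¹ : ℝ≥0∞) < 1 := by
    rw [ENNReal.inv_lt_one]; exact one_lt_two
  have hCne : ∀ ω, 2 * r ω ≠ ⊤ := fun ω => ENNReal.mul_ne_top (by norm_num) (hrT ω)
  have hc : ∀ ω, CauchySeq fun m => u m ω := fun ω =>
    cauchySeq_of_edist_le_geometric 2⁻¹ (2 * r ω) h2inv (hCne ω) (fun n => hstep n ω)
  have hlim : ∀ ω, ∃ x, Tendsto (fun m => u m ω) atTop (𝓝 x) := fun ω =>
    cauchySeq_tendsto_of_complete (hc ω)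
  refine ⟨fun ω => (hlim ω).choose, ?_, ?_⟩
  · exact measurable_of_tendsto_metrizable hum
      (tendsto_pi_nhds.2 fun ω => (hlim ω).choose_spec)
  · intro ω
    have hgt := (hlim ω).choose_spec
    constructor
    · rw [EMetric.mem_iff_infEdist_zero_of_closed (hcl ω)]
      refine le_antisymm ?_ zero_le
      have ht1 : Tendsto (fun m => infEdist (u m ω) (F ω)) atTop
          (𝓝 (infEdist ((hlim ω).choose) (F ω))) :=
        (EMetric.continuous_infEdist.tendsto _).comp hgt
      have ht2 : Tendsto (fun m : ℕ => (2⁻¹ : ℝ≥0∞) ^ m * r ω) atTop (𝓝 0) := by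
        have := ENNReal.Tendsto.mul_const
          (ENNReal.tendsto_pow_atTop_nhds_zero_of_lt_one h2inv) (b := r ω) (Or.inr (hrT ω))
        simpa using this
      exact le_of_tendsto_of_tendsto' ht1 ht2 fun m => (hinv m ω).le
    · have := edist_le_of_edist_le_geometric_of_tendsto₀ 2⁻¹ (2 * r ω)
        (fun n => hstep n ω) hgt
      rw [hu0] at this
      rw [edist_comm]
      calc edist (v ω) ((hlim ω).choose) ≤ 2 * r ω / (1 - 2⁻¹) := this
        _ = 4 * r ω := by
            rw [ENNReal.one_sub_inv_two, ENNReal.div_eq_inv_mul,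
              inv_inv]
            ring


theorem castaing {α E : Type*} [MeasurableSpace α] [MetricSpace E]
    [TopologicalSpace.SeparableSpace E] [CompleteSpace E] [MeasurableSpace E] [BorelSpace E]
    [Nonempty E]
    {F : α → Set E} (hcl : ∀ ω, IsClosed (F ω)) (hne : ∀ ω, (F ω).Nonempty)
    (hm : ∀ x : E, Measurable fun ω => infEdist x (F ω)) :
    ∃ c : ℕ × ℕ → α → E, (∀ p, Measurable (c p)) ∧
      (∀ p ω, c p ω ∈ F ω) ∧ ∀ ω, F ω ⊆ closure (Set.range fun p => c p ω) := by
  classical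
  set e : ℕ → E := TopologicalSpace.denseSeq E with he
  have hde : DenseRange e := TopologicalSpace.denseRange_denseSeq E
  have H : ∀ p : ℕ × ℕ, ∃ g : α → E, Measurable g ∧ ∀ ω, g ω ∈ F ω ∧
      edist (g ω) (e p.1) ≤ 4 * (infEdist (e p.1) (F ω) + 2⁻¹ ^ p.2) := by
    intro p
    have h1 : ∀ ω, infEdist (e p.1) (F ω) ≠ ⊤ := fun ω => Metric.infEdist_ne_top (hne ω)
    have h2 : ((2 : ℝ≥0∞)⁻¹) ^ p.2 ≠ 0 := pow_ne_zero _ (by simp)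
    have h3 : ((2 : ℝ≥0∞)⁻¹) ^ p.2 ≠ ⊤ := ENNReal.pow_ne_top (by simp)
    exact krn_selection hcl hm (fun _ => e p.1) measurable_const
      (fun ω => infEdist (e p.1) (F ω) + 2⁻¹ ^ p.2) ((hm (e p.1)).add measurable_const)
      (fun ω => ENNReal.lt_add_right (h1 ω) h2)
      (fun ω => ENNReal.add_ne_top.2 ⟨h1 ω, h3⟩)
  choose c hc1 hc2 using H
  refine ⟨c, hc1, fun p ω => (hc2 p ω).1, ?_⟩
  intro ω x hx
  rw [EMetric.mem_closure_iff]
  intro ε hε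
  by_cases hεT : ε = ⊤
  · -- δ = 1 works
    obtain ⟨z, hz, hez⟩ := EMetric.mem_closure_iff.1 (hde x) 1 one_pos
    obtain ⟨j, rfl⟩ := hz
    obtain ⟨m, hm2⟩ : ∃ m : ℕ, (2⁻¹ : ℝ≥0∞) ^ m < 1 :=
      ⟨1, by rw [pow_one]; exact ENNReal.inv_lt_one.2 one_lt_two⟩
    refine ⟨c (j, m) ω, Set.mem_range_self _, ?_⟩
    rw [hεT]
    calc edist x (c (j, m) ω) ≤ edist x (e j) + edist (c (j, m) ω) (e j) := by
          rw [edist_comm (c (j, m) ω)]; exact edist_triangle _ _ _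
      _ ≤ 1 + 4 * (infEdist (e j) (F ω) + 2⁻¹ ^ m) := by
          refine add_le_add hez.le ((hc2 (j, m) ω).2)
      _ ≤ 1 + 4 * (1 + 1) := by
          refine add_le_add le_rfl (mul_le_mul_right (add_le_add ?_ hm2.le) 4)
          exact le_trans (infEdist_le_edist_of_mem hx) (by rw [edist_comm]; exact hez.le)
      _ < ⊤ := by norm_num
  · set δ : ℝ≥0∞ := ε / 10 with hδdef
    have hδ0 : δ ≠ 0 := by
      simp only [hδdef, ne_eq, ENNReal.div_eq_zero_iff]
      push_neg
      exact ⟨hε.ne', by norm_num⟩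
    have hδT : δ ≠ ⊤ := by
      simp only [hδdef, ne_eq, ENNReal.div_eq_top]
      push_neg
      exact ⟨fun _ => by norm_num, fun h => absurd h hεT⟩
    obtain ⟨z, hz, hez⟩ := EMetric.mem_closure_iff.1 (hde x) δ (pos_iff_ne_zero.2 hδ0)
    obtain ⟨j, rfl⟩ := hz
    obtain ⟨m, hm2⟩ : ∃ m : ℕ, (2⁻¹ : ℝ≥0∞) ^ m < δ := by
      obtain ⟨m, hm2⟩ := ENNReal.exists_inv_two_pow_lt hδ0
      exact ⟨m, hm2⟩
    refine ⟨c (j, m) ω, Set.mem_range_self _, ?_⟩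
    have hinf : infEdist (e j) (F ω) ≤ δ :=
      le_trans (infEdist_le_edist_of_mem hx) (by rw [edist_comm]; exact hez.le)
    calc edist x (c (j, m) ω) ≤ edist x (e j) + edist (c (j, m) ω) (e j) := by
          rw [edist_comm (c (j, m) ω)]; exact edist_triangle _ _ _
      _ ≤ δ + 4 * (δ + δ) := by
          exact add_le_add hez.le
            (le_trans ((hc2 (j, m) ω).2) (mul_le_mul_right (add_le_add hinf hm2.le) 4))
      _ = 9 * δ := by ring
      _ < 10 * δ := by
          exact ENNReal.mul_lt_mul_left hδ0 hδT (by norm_num)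
      _ ≤ ε := by
          rw [hδdef]
          rw [ENNReal.mul_div_cancel' (by norm_num) (by norm_num)]

theorem trajectory_selection {Ω X : Type*} [MeasurableSpace Ω] [MetricSpace X]
    [TopologicalSpace.SeparableSpace X] [CompleteSpace X] [MeasurableSpace X] [BorelSpace X]
    [Nonempty X]
    (U : ℕ → ℕ → Ω → X → X)
    (hUid : ∀ N ω x, U N N ω x = x)
    (hUco : ∀ (N M R : ℕ) (ω : Ω), N ≤ M → M ≤ R → ∀ x, U N M ω (U M R ω x) = U N R ω x)
    (hUcont : ∀ N M ω, Continuous (U N M ω))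
    (hUmeas : ∀ N M, Measurable fun p : Ω × X => U N M p.1 p.2)
    (B : ℕ → Ω → Set X)
    (hBc : ∀ N ω, IsCompact (B N ω)) (hBne : ∀ N ω, (B N ω).Nonempty)
    (hBinv : ∀ N M ω, N ≤ M → U N M ω '' B M ω ⊆ B N ω)
    (hBm : ∀ (N : ℕ) (x : X), Measurable fun ω => EMetric.infEdist x (B N ω)) :
    ∃ z : ℕ → Ω → X, (∀ N, Measurable (z N)) ∧
      ∀ ω, (∀ N, z N ω ∈ B N ω) ∧ ∀ N M, N ≤ M → z N ω = U N M ω (z M ω) := by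
  classical
  letI : SecondCountableTopology X := UniformSpace.secondCountable_of_separable X
  -- Castaing families for the B N
  have hcast : ∀ N : ℕ, ∃ c : ℕ × ℕ → Ω → X, (∀ p, Measurable (c p)) ∧
      (∀ p ω, c p ω ∈ B N ω) ∧ ∀ ω, B N ω ⊆ closure (Set.range fun p => c p ω) :=
    fun N => castaing (fun ω => (hBc N ω).isClosed) (hBne N) (hBm N)
  choose cB hcB1 hcB2 hcB3 using hcast
  -- the sequence space
  letI : TopologicalSpace.UpgradedIsCompletelyMetrizableSpace (ℕ → X) := TopologicalSpace.upgradeIsCompletelyMetrizable (ℕ → X)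
  set P : Ω → Set (ℕ → X) := fun ω => Set.pi Set.univ (fun N => B N ω) with hP
  set Ψ : ℕ → Ω → (ℕ → X) → (ℕ → X) :=
    fun M ω w N => if N ≤ M then U N M ω (w M) else w N with hΨ
  set K : ℕ → Ω → Set (ℕ → X) := fun M ω =>
    {z | ∀ N, N ≤ M → z N = U N M ω (z M)} ∩ P ω with hK
  have hΨcont : ∀ M ω, Continuous (Ψ M ω) := by
    intro M ω
    apply continuous_pi
    intro N
    by_cases h : N ≤ M
    · simp only [hΨ, if_pos h]
      exact (hUcont N M ω).comp (continuous_apply M)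
    · simp only [hΨ, if_neg h]
      exact continuous_apply N
  have hPc : ∀ ω, IsCompact (P ω) := fun ω => isCompact_univ_pi (fun N => hBc N ω)
  have hPne : ∀ ω, (P ω).Nonempty := fun ω =>
    ⟨fun N => (hBne N ω).some, fun N _ => (hBne N ω).some_mem⟩
  -- K M ω is the image of P ω under Ψ M ω
  have hKim : ∀ M ω, K M ω = Ψ M ω '' P ω := by
    intro M ω
    apply Set.Subset.antisymm
    · intro z hz
      refine ⟨z, hz.2, ?_⟩
      funext N
      by_cases h : N ≤ M
      · simp only [hΨ, if_pos h]
        exact (hz.1 N h).symm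
      · simp only [hΨ, if_neg h]
    · rintro _ ⟨w, hw, rfl⟩
      have hwM : Ψ M ω w M = w M := by
        simp only [hΨ, if_pos (le_refl M), hUid]
      constructor
      · intro N hN
        simp only [hΨ, if_pos hN, if_pos (le_refl M), hUid]
      · intro N _
        by_cases h : N ≤ M
        · simp only [hΨ, if_pos h]
          exact hBinv N M ω h ⟨w M, hw M (Set.mem_univ M), rfl⟩
        · simp only [hΨ, if_neg h]
          exact hw N (Set.mem_univ N)
  have hKc : ∀ M ω, IsCompact (K M ω) := by
    intro M ω
    rw [hKim]
    exact (hPc ω).image (hΨcont M ω)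
  have hKne : ∀ M ω, (K M ω).Nonempty := by
    intro M ω
    rw [hKim]
    exact ((hPne ω).image _)
  have hKnest : ∀ M ω, K (M + 1) ω ⊆ K M ω := by
    intro M ω z hz
    have hzM : z M = U M (M + 1) ω (z (M + 1)) := hz.1 M (Nat.le_succ M)
    constructor
    · intro N hN
      have h1 : z N = U N (M + 1) ω (z (M + 1)) := hz.1 N (hN.trans (Nat.le_succ M))
      rw [h1, hzM, hUco N M (M + 1) ω hN (Nat.le_succ M)]
    · exact hz.2
  have hKanti : ∀ (ω : Ω), ∀ {N M : ℕ}, N ≤ M → K M ω ⊆ K N ω := by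
    intro ω N M h
    induction h with
    | refl => exact Set.Subset.refl _
    | step h ih => exact (hKnest _ ω).trans ih
  -- countable dense families in K M ω
  set famP : List (ℕ × ℕ) → Ω → (ℕ → X) :=
    fun L ω N => cB N (L.getD N (0, 0)) ω with hfamP
  have hfamPmem : ∀ L ω, famP L ω ∈ P ω := fun L ω N _ => hcB2 N _ ω
  have hfamPdense : ∀ ω, P ω ⊆ closure (Set.range fun L => famP L ω) := by
    intro ω w hw
    rw [_root_.mem_closure_iff_nhds]
    intro t ht
    rw [_root_.mem_nhds_iff] at ht
    obtain ⟨s, hst, hs, hws⟩ := ht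
    obtain ⟨I, v, hv, hsub⟩ := isOpen_pi_iff.1 hs w hws
    -- choose good indices on I
    have hchoice : ∀ N ∈ I, ∃ p : ℕ × ℕ, cB N p ω ∈ v N := by
      intro N hN
      have hwN : w N ∈ B N ω := hw N (Set.mem_univ N)
      have := hcB3 N ω hwN
      rw [_root_.mem_closure_iff_nhds] at this
      obtain ⟨y, hy1, hy2⟩ := this (v N) ((hv N hN).1.mem_nhds (hv N hN).2)
      obtain ⟨p, rfl⟩ := hy2
      exact ⟨p, hy1⟩
    set σ : ℕ → ℕ × ℕ := fun N => if h : N ∈ I then (hchoice N h).choose else (0, 0) with hσ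
    obtain ⟨len, hlen⟩ : ∃ len, ∀ N ∈ I, N < len := by
      rcases I.eq_empty_or_nonempty with h | h
      · exact ⟨0, by simp [h]⟩
      · exact ⟨(I.max' h) + 1, fun N hN => Nat.lt_succ_of_le (I.le_max' N hN)⟩
    set L : List (ℕ × ℕ) := (List.range len).map σ with hL
    refine ⟨famP L ω, ?_, Set.mem_range_self L⟩
    apply hst
    apply hsub
    intro N hN'
    have hN : N ∈ I := Finset.mem_coe.1 hN'
    have hNlen : N < len := hlen N hN
    have hgetD : L.getD N (0, 0) = σ N := by
      rw [hL, List.getD_eq_getElem?_getD, List.getElem?_map, List.getElem?_range hNlen]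
      rfl
    simp only [hfamP, hgetD, hσ]
    rw [dif_pos hN]
    exact (hchoice N hN).choose_spec
  set d : ℕ → List (ℕ × ℕ) → Ω → (ℕ → X) := fun M L ω => Ψ M ω (famP L ω) with hd
  have hdmem : ∀ M L ω, d M L ω ∈ K M ω := by
    intro M L ω
    rw [hKim]
    exact ⟨famP L ω, hfamPmem L ω, rfl⟩
  have hdmeas : ∀ M L, Measurable (d M L) := by
    intro M L
    apply measurable_pi_lambda
    intro N
    by_cases h : N ≤ M
    · simp only [hd, hΨ, if_pos h, hfamP]
      exact (hUmeas N M).comp (measurable_id.prodMk (hcB1 M _))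
    · simp only [hd, hΨ, if_neg h, hfamP]
      exact hcB1 N _
  have hKd : ∀ M ω, K M ω = closure (Set.range fun L => d M L ω) := by
    intro M ω
    apply Set.Subset.antisymm
    · rw [hKim]
      calc Ψ M ω '' P ω ⊆ Ψ M ω '' closure (Set.range fun L => famP L ω) :=
            Set.image_mono (hfamPdense ω)
        _ ⊆ closure (Ψ M ω '' Set.range fun L => famP L ω) :=
            image_closure_subset_closure_image (hΨcont M ω)
        _ ⊆ closure (Set.range fun L => d M L ω) := by
            apply closure_mono
            rintro _ ⟨_, ⟨L, rfl⟩, rfl⟩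
            exact ⟨L, rfl⟩
    · refine closure_minimal ?_ (hKc M ω).isClosed
      rintro _ ⟨L, rfl⟩
      exact hdmem M L ω
  have hKinf : ∀ (u : ℕ → X) (M : ℕ), Measurable fun ω => infEdist u (K M ω) := by
    intro u M
    have : ∀ ω, infEdist u (K M ω) = ⨅ L : List (ℕ × ℕ), edist u (d M L ω) := by
      intro ω
      rw [hKd M ω]
      exact (infEdist_closure (x := u) (s := Set.range fun L => d M L ω)).trans iInf_range
    simp_rw [this]
    exact Measurable.iInf fun L =>
      (continuous_const.edist continuous_id).measurable.comp (hdmeas M L)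
  -- the intersection
  set G : Ω → Set (ℕ → X) := fun ω => ⋂ M, K M ω with hG
  have hGne : ∀ ω, (G ω).Nonempty := by
    intro ω
    apply IsCompact.nonempty_iInter_of_sequence_nonempty_isCompact_isClosed
      (fun M => K M ω) (fun M => hKnest M ω) (fun M => hKne M ω) (hKc 0 ω)
      (fun M => (hKc M ω).isClosed)
  have hGcl : ∀ ω, IsClosed (G ω) := fun ω =>
    isClosed_iInter fun M => (hKc M ω).isClosed
  have hGsup : ∀ (u : ℕ → X) (ω : Ω), infEdist u (G ω) = ⨆ M, infEdist u (K M ω) := by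
    intro u ω
    apply le_antisymm
    · -- hard direction
      have hy : ∀ M, ∃ y ∈ K M ω, infEdist u (K M ω) = edist u y := fun M =>
        (hKc M ω).exists_infEdist_eq_edist (hKne M ω) u
      choose y hy1 hy2 using hy
      have hy0 : ∀ M, y M ∈ K 0 ω := fun M => hKanti ω (Nat.zero_le M) (hy1 M)
      obtain ⟨a, haK0, φ, hφmono, hφtend⟩ := (hKc 0 ω).tendsto_subseq hy0
      have haG : a ∈ G ω := by
        rw [hG]
        apply Set.mem_iInter.2
        intro M
        apply (hKc M ω).isClosed.mem_of_tendsto hφtend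
        filter_upwards [eventually_ge_atTop M] with N hN
        exact hKanti ω (hN.trans (hφmono.le_apply)) (hy1 (φ N))
      have h1 : infEdist u (G ω) ≤ edist u a := infEdist_le_edist_of_mem haG
      have h2 : Tendsto (fun N => edist u (y (φ N))) atTop (𝓝 (edist u a)) :=
        ((continuous_const.edist continuous_id).tendsto a).comp hφtend
      refine h1.trans (le_of_tendsto h2 ?_)
      filter_upwards with N
      rw [← hy2 (φ N)]
      exact le_iSup (fun M => infEdist u (K M ω)) (φ N)
    · exact iSup_le fun M => infEdist_anti (Set.iInter_subset _ M)
  have hGm : ∀ u : ℕ → X, Measurable fun ω => infEdist u (G ω) := by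
    intro u
    simp_rw [hGsup u]
    exact Measurable.iSup fun M => hKinf u M
  -- select
  obtain ⟨u₀⟩ : Nonempty (ℕ → X) := inferInstance
  obtain ⟨g, hgmeas, hgmem⟩ := krn_selection hGcl hGm (fun _ => u₀) measurable_const
    (fun ω => infEdist u₀ (G ω) + 1) ((hGm u₀).add measurable_const)
    (fun ω => ENNReal.lt_add_right (Metric.infEdist_ne_top (hGne ω)) one_ne_zero)
    (fun ω => ENNReal.add_ne_top.2 ⟨Metric.infEdist_ne_top (hGne ω), one_ne_top⟩)
  refine ⟨fun N ω => g ω N, fun N => (measurable_pi_apply N).comp hgmeas, ?_⟩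
  intro ω
  have hgG : g ω ∈ G ω := (hgmem ω).1
  have hgK : ∀ M, g ω ∈ K M ω := fun M => Set.mem_iInter.1 hgG M
  constructor
  · intro N
    exact (hgK N).2 N (Set.mem_univ N)
  · intro N M hNM
    exact (hgK M).1 N hNM

/-- if `A t ω` is a compact forward invariant family for the stochastic flow
`S` (measurable in `ω`, nonempty compact and forward invariant on a full-measure set `Ω₀`),
then there exists an evolution system of measures `μ t` for `S`, with disintegration
`κ t : Ω → Measure X`, supported by `A`: `κ t ω (A t ω) = 1` for `ℙ`-a.e. `ω`. -/
theorem stmt1 {Ω X : Type*} [MeasurableSpace Ω] [MetricSpace X] [CompleteSpace X]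
    [TopologicalSpace.SeparableSpace X] [MeasurableSpace X] [BorelSpace X]
    (ℙ : Measure Ω) [IsProbabilityMeasure ℙ]
    (S : ℝ → ℝ → Ω → X → X) (hS : IsStochasticFlow ℙ S)
    (A : ℝ → Ω → Set X)
    (Ω₀ : Set Ω) (hΩ₀m : MeasurableSet Ω₀) (hΩ₀ : ℙ Ω₀ = 1)
    (ha : ∀ (x : X) (t : ℝ), Measurable fun ω => Metric.infDist x (A t ω))
    (hb : ∀ ω ∈ Ω₀, ∀ t : ℝ, (A t ω).Nonempty ∧ IsCompact (A t ω))
    (hc : ∀ ω ∈ Ω₀, ∀ s t : ℝ, s ≤ t → S t s ω '' A s ω ⊆ A t ω) :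
    ∃ (μ : ℝ → Measure (Ω × X)) (κ : ℝ → Ω → Measure X),
      IsEvolutionSystem ℙ S μ ∧
      (∀ (t : ℝ) (ω : Ω), IsProbabilityMeasure (κ t ω)) ∧
      (∀ (t : ℝ) (B : Set X), MeasurableSet B → Measurable fun ω => κ t ω B) ∧
      (∀ (t : ℝ) (F : Set Ω) (B : Set X), MeasurableSet F → MeasurableSet B →
        μ t (F ×ˢ B) = ∫⁻ ω in F, κ t ω B ∂ℙ) ∧
      (∀ t : ℝ, ∀ᵐ ω ∂ℙ, κ t ω (A t ω) = 1) := by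
  classical
  obtain ⟨hae, hS2⟩ := hS
  -- a measurable full-measure set on which everything is nice
  have h0 : ∀ᵐ ω ∂ℙ, ω ∈ Ω₀ := by
    rw [ae_iff]
    have : {ω | ¬ ω ∈ Ω₀} = Ω₀ᶜ := rfl
    rw [this, measure_compl hΩ₀m (measure_ne_top ℙ _), hΩ₀, measure_univ]
    simp
  have hgood := hae.and h0
  set N₀ : Set Ω := {ω | ¬ (((∀ s r t : ℝ, s ≤ r → r ≤ t → ∀ x : X,
      S t r ω (S r s ω x) = S t s ω x) ∧
      (∀ s t : ℝ, s ≤ t → Continuous fun x : X => S t s ω x) ∧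
      (∀ t : ℝ, ∀ x : X, S t t ω x = x)) ∧ ω ∈ Ω₀)} with hN₀
  have hN₀null : ℙ N₀ = 0 := by
    rw [← ae_iff] at *
    exact hgood
  set Ω₁ : Set Ω := (toMeasurable ℙ N₀)ᶜ with hΩ₁def
  have hΩ₁m : MeasurableSet Ω₁ := (measurableSet_toMeasurable ℙ N₀).compl
  have hΩ₁c0 : ℙ Ω₁ᶜ = 0 := by
    rw [hΩ₁def, compl_compl, measure_toMeasurable]
    exact hN₀null
  have hΩ₁ae : ∀ᵐ ω ∂ℙ, ω ∈ Ω₁ := by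
    rw [ae_iff]
    exact hΩ₁c0
  have hΩ₁good : ∀ ω ∈ Ω₁, ((∀ s r t : ℝ, s ≤ r → r ≤ t → ∀ x : X,
      S t r ω (S r s ω x) = S t s ω x) ∧
      (∀ s t : ℝ, s ≤ t → Continuous fun x : X => S t s ω x) ∧
      (∀ t : ℝ, ∀ x : X, S t t ω x = x)) ∧ ω ∈ Ω₀ := by
    intro ω hω
    by_contra h
    exact hω (subset_toMeasurable ℙ N₀ h)
  -- X is nonempty
  have hΩ₁ne : Ω₁.Nonempty := by
    by_contra h
    rw [Set.not_nonempty_iff_eq_empty] at h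
    have h1 : ℙ Ω₁ᶜ = 1 := by rw [h, Set.compl_empty, measure_univ]
    rw [hΩ₁c0] at h1
    exact zero_ne_one h1
  obtain ⟨ω₁, hω₁⟩ := hΩ₁ne
  obtain ⟨x₀, hx₀⟩ := (hb ω₁ (hΩ₁good ω₁ hω₁).2 0).1
  haveI : Nonempty X := ⟨x₀⟩
  -- the modified flow
  set S' : ℝ → ℝ → Ω → X → X :=
    fun t s ω x => if ω ∈ Ω₁ ∧ s ≤ t then S t s ω x else x with hS'def
  have hS'eq_on : ∀ (t s : ℝ) (ω : Ω), ω ∈ Ω₁ → s ≤ t → S' t s ω = S t s ω := by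
    intro t s ω h1 h2
    funext x
    simp only [hS'def]
    rw [if_pos (show ω ∈ Ω₁ ∧ s ≤ t from ⟨h1, h2⟩)]
  have hS'eq_id : ∀ (t s : ℝ) (ω : Ω), ω ∉ Ω₁ → S' t s ω = fun x => x := by
    intro t s ω h1
    funext x
    simp only [hS'def]
    rw [if_neg (fun hh => h1 hh.1)]
  have hS'eq_id' : ∀ (t s : ℝ) (ω : Ω), ¬ s ≤ t → S' t s ω = fun x => x := by
    intro t s ω h1
    funext x
    simp only [hS'def]
    rw [if_neg (fun hh => h1 hh.2)]
  have hS'cont : ∀ t s ω, Continuous fun x => S' t s ω x := by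
    intro t s ω
    by_cases h1 : ω ∈ Ω₁
    · by_cases h2 : s ≤ t
      · rw [hS'eq_on t s ω h1 h2]
        exact ((hΩ₁good ω h1).1.2.1 s t h2)
      · rw [hS'eq_id' t s ω h2]
        exact continuous_id
    · rw [hS'eq_id t s ω h1]
      exact continuous_id
  have hS'id : ∀ t ω x, S' t t ω x = x := by
    intro t ω x
    by_cases h : ω ∈ Ω₁
    · rw [hS'eq_on t t ω h le_rfl]
      exact (hΩ₁good ω h).1.2.2 t x
    · rw [hS'eq_id t t ω h]
  have hS'co : ∀ (ω : Ω) (s r t : ℝ), s ≤ r → r ≤ t → ∀ x,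
      S' t r ω (S' r s ω x) = S' t s ω x := by
    intro ω s r t hsr hrt x
    by_cases hω : ω ∈ Ω₁
    · rw [hS'eq_on r s ω hω hsr, hS'eq_on t r ω hω hrt, hS'eq_on t s ω hω (hsr.trans hrt)]
      exact (hΩ₁good ω hω).1.1 s r t hsr hrt x
    · rw [hS'eq_id r s ω hω, hS'eq_id t r ω hω, hS'eq_id t s ω hω]
  have hSmeas1 : ∀ (t s : ℝ) (_ : s ≤ t) (x : X), Measurable fun ω => S t s ω x := by
    intro t s hst x
    have heq : (fun ω => S t s ω x) = (fun p : {s : ℝ // s ≤ t} × Ω => S t p.1.1 p.2 x) ∘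
        (fun ω => ((⟨s, hst⟩ : {s : ℝ // s ≤ t}), ω)) := rfl
    rw [heq]
    exact (hS2 t x).comp (Measurable.prodMk measurable_const measurable_id)
  have hS'measx : ∀ (t s : ℝ) (x : X), Measurable fun ω => S' t s ω x := by
    intro t s x
    by_cases hst : s ≤ t
    · have heq2 : (fun ω => S' t s ω x) = fun ω => if ω ∈ Ω₁ then S t s ω x else x := by
        funext ω
        by_cases hω : ω ∈ Ω₁
        · rw [hS'eq_on t s ω hω hst, if_pos hω]
        · rw [hS'eq_id t s ω hω, if_neg hω]
      rw [heq2]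
      exact Measurable.ite hΩ₁m (hSmeas1 t s hst x) measurable_const
    · have heq2 : (fun ω => S' t s ω x) = fun _ => x := by
        funext ω
        rw [hS'eq_id' t s ω hst]
      rw [heq2]
      exact measurable_const
  -- joint measurability of S'
  set e : ℕ → X := TopologicalSpace.denseSeq X with he
  have hde : DenseRange e := TopologicalSpace.denseRange_denseSeq X
  have hdex : ∀ (k : ℕ) (x : X), ∃ j, dist x (e j) < (1/2 : ℝ) ^ k := by
    intro k x
    have := Metric.mem_closure_iff.1 (hde x) ((1/2 : ℝ) ^ k) (by positivity)
    obtain ⟨y, hy1, hy2⟩ := this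
    obtain ⟨j, rfl⟩ := hy1
    exact ⟨j, hy2⟩
  have hPk : ∀ (k j : ℕ), MeasurableSet {x : X | dist x (e j) < (1/2 : ℝ) ^ k} := by
    intro k j
    exact measurableSet_lt ((continuous_id.dist continuous_const).measurable) measurable_const
  have hidxm : ∀ k, Measurable fun x : X => Nat.find (hdex k x) := fun k =>
    measurable_find _ (hPk k)
  have hetend : ∀ x : X, Tendsto (fun k => e (Nat.find (hdex k x))) atTop (𝓝 x) := by
    intro x
    rw [tendsto_iff_dist_tendsto_zero]
    refine squeeze_zero (g := fun k => (1/2 : ℝ) ^ k) (fun k => dist_nonneg) (fun k => ?_) ?_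
    · rw [dist_comm]
      exact (Nat.find_spec (hdex k x)).le
    · exact tendsto_pow_atTop_nhds_zero_of_lt_one (by norm_num) (by norm_num)
  have hS'joint : ∀ t s : ℝ, Measurable fun p : Ω × X => S' t s p.1 p.2 := by
    intro t s
    have hH : Measurable fun q : Ω × ℕ => S' t s q.1 (e q.2) :=
      measurable_from_prod_countable_left (fun j => hS'measx t s (e j))
    have happrox : ∀ k : ℕ, Measurable fun p : Ω × X => S' t s p.1 (e (Nat.find (hdex k p.2))) := by
      intro k
      exact hH.comp (measurable_fst.prodMk ((hidxm k).comp measurable_snd))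
    apply measurable_of_tendsto_metrizable happrox
    rw [tendsto_pi_nhds]
    intro p
    exact ((hS'cont t s p.1).tendsto p.2).comp (hetend p.2)
  -- the B family and U flow at nonpositive integer times
  set B : ℕ → Ω → Set X := fun N ω => if ω ∈ Ω₁ then A (-(N : ℝ)) ω else {x₀} with hB
  set U : ℕ → ℕ → Ω → X → X := fun N M ω x => S' (-(N : ℝ)) (-(M : ℝ)) ω x with hU
  have hcast : ∀ N M : ℕ, N ≤ M → -(M : ℝ) ≤ -(N : ℝ) := by
    intro N M h
    exact neg_le_neg (Nat.cast_le.2 h)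
  have hBc : ∀ N ω, IsCompact (B N ω) := by
    intro N ω
    by_cases hω : ω ∈ Ω₁
    · simp only [hB, if_pos hω]
      exact (hb ω (hΩ₁good ω hω).2 _).2
    · simp only [hB, if_neg hω]
      exact isCompact_singleton
  have hBne : ∀ N ω, (B N ω).Nonempty := by
    intro N ω
    by_cases hω : ω ∈ Ω₁
    · simp only [hB, if_pos hω]
      exact (hb ω (hΩ₁good ω hω).2 _).1
    · simp only [hB, if_neg hω]
      exact Set.singleton_nonempty x₀
  have hBinv : ∀ N M ω, N ≤ M → U N M ω '' B M ω ⊆ B N ω := by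
    intro N M ω h
    by_cases hω : ω ∈ Ω₁
    · simp only [hU, hB, if_pos hω, hS'eq_on (-(N : ℝ)) (-(M : ℝ)) ω hω (hcast N M h)]
      exact hc ω (hΩ₁good ω hω).2 (-(M : ℝ)) (-(N : ℝ)) (hcast N M h)
    · simp only [hU, hB, if_neg hω, hS'eq_id (-(N : ℝ)) (-(M : ℝ)) ω hω, Set.image_id']
      exact Set.Subset.refl _
  have hBm : ∀ (N : ℕ) (x : X), Measurable fun ω => EMetric.infEdist x (B N ω) := by
    intro N x
    have : (fun ω => EMetric.infEdist x (B N ω)) = Ω₁.piecewise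
        (fun ω => ENNReal.ofReal (Metric.infDist x (A (-(N : ℝ)) ω)))
        (fun _ => edist x x₀) := by
      funext ω
      by_cases hω : ω ∈ Ω₁
      · rw [Set.piecewise_eq_of_mem _ _ _ hω]
        simp only [hB, if_pos hω]
        rw [Metric.infDist, ENNReal.ofReal_toReal]
        · rfl
        exact Metric.infEdist_ne_top (hb ω (hΩ₁good ω hω).2 _).1
      · rw [Set.piecewise_eq_of_notMem _ _ _ hω]
        simp only [hB, if_neg hω]
        exact EMetric.infEdist_singleton
    rw [this]
    exact Measurable.piecewise hΩ₁m (ENNReal.measurable_ofReal.comp (ha x _)) measurable_const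
  -- select a complete trajectory
  obtain ⟨z, hzmeas, hz⟩ := trajectory_selection U
    (fun N ω x => hS'id _ ω x)
    (fun N M R ω hNM hMR x => hS'co ω _ _ _ (hcast M R hMR) (hcast N M hNM) x)
    (fun N M ω => hS'cont _ _ ω)
    (fun N M => hS'joint _ _)
    B hBc hBne hBinv hBm
  -- the complete trajectory at all real times
  set Nt : ℝ → ℕ := fun t => (Int.floor t).natAbs with hNt
  have hNtle : ∀ t : ℝ, -((Nt t : ℤ) : ℝ) ≤ t := by
    intro t
    have h1 : (-(Nt t : ℤ) : ℤ) ≤ ⌊t⌋ := by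
      rw [hNt]
      rw [← Int.abs_eq_natAbs]
      exact neg_abs_le _
    calc (-((Nt t : ℤ) : ℝ)) = ((-(Nt t : ℤ) : ℤ) : ℝ) := by push_cast; ring
      _ ≤ ((⌊t⌋ : ℤ) : ℝ) := Int.cast_le.2 h1
      _ ≤ t := Int.floor_le t
  have hNtle' : ∀ t : ℝ, -((Nt t : ℕ) : ℝ) ≤ t := by
    intro t
    have := hNtle t
    push_cast at this ⊢
    exact this
  set a : ℝ → Ω → X := fun t ω => S' t (-(Nt t : ℝ)) ω (z (Nt t) ω) with hadef
  have hastar : ∀ (t : ℝ) (R : ℕ) (_ : Nt t ≤ R) (ω : Ω),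
      a t ω = S' t (-(R : ℝ)) ω (z R ω) := by
    intro t R hR ω
    have h1 : z (Nt t) ω = S' (-(Nt t : ℝ)) (-(R : ℝ)) ω (z R ω) := (hz ω).2 (Nt t) R hR
    rw [hadef]
    simp only
    rw [h1]
    exact hS'co ω (-(R : ℝ)) (-(Nt t : ℝ)) t (hcast _ R hR) (hNtle' t) (z R ω)
  have hacoc : ∀ (s t : ℝ), s ≤ t → ∀ ω, S' t s ω (a s ω) = a t ω := by
    intro s t hst ω
    set R : ℕ := max (Nt s) (Nt t) with hR
    have has : a s ω = S' s (-(R : ℝ)) ω (z R ω) := hastar s R (le_max_left _ _) ω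
    have hat : a t ω = S' t (-(R : ℝ)) ω (z R ω) := hastar t R (le_max_right _ _) ω
    have hRs : -(R : ℝ) ≤ s := le_trans (hcast _ R (le_max_left _ _)) (hNtle' s)
    rw [has, hat, hS'co ω (-(R : ℝ)) s t hRs hst]
  have hameas : ∀ t, Measurable (a t) := by
    intro t
    exact (hS'joint t (-(Nt t : ℝ))).comp (measurable_id.prodMk (hzmeas (Nt t)))
  have hamem : ∀ (t : ℝ) (ω : Ω), ω ∈ Ω₁ → a t ω ∈ A t ω := by
    intro t ω hω
    have h1 : z (Nt t) ω ∈ A (-(Nt t : ℝ)) ω := by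
      have := (hz ω).1 (Nt t)
      simpa only [hB, if_pos hω] using this
    have h2 : a t ω = S t (-(Nt t : ℝ)) ω (z (Nt t) ω) := by
      rw [hadef]
      simp only
      rw [hS'eq_on t (-(Nt t : ℝ)) ω hω (hNtle' t)]
    rw [h2]
    exact hc ω (hΩ₁good ω hω).2 (-(Nt t : ℝ)) t (hNtle' t) ⟨z (Nt t) ω, h1, rfl⟩
  -- the measures
  have hgm : ∀ t : ℝ, Measurable fun ω => (ω, a t ω) := fun t =>
    measurable_id.prodMk (hameas t)
  refine ⟨fun t => ℙ.map (fun ω => (ω, a t ω)), fun t ω => Measure.dirac (a t ω),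
    ⟨?_, ?_, ?_⟩, ?_, ?_, ?_, ?_⟩
  · -- probability measures
    intro t
    exact Measure.isProbabilityMeasure_map (hgm t).aemeasurable
  · -- marginal
    intro t
    rw [Measure.map_map measurable_fst (hgm t)]
    have : (Prod.fst ∘ fun ω => (ω, a t ω)) = id := rfl
    rw [this, Measure.map_id]
  · -- evolution
    intro s t hst
    have hf' : Measurable fun p : Ω × X => (p.1, S' t s p.1 p.2) :=
      measurable_fst.prodMk (hS'joint t s)
    have hnull : (ℙ.map (fun ω => (ω, a s ω))) (Prod.fst ⁻¹' Ω₁ᶜ) = 0 := by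
      rw [Measure.map_apply (hgm s) (measurable_fst hΩ₁m.compl)]
      have : ((fun ω => (ω, a s ω)) ⁻¹' (Prod.fst ⁻¹' Ω₁ᶜ)) = Ω₁ᶜ := rfl
      rw [this]
      exact hΩ₁c0
    have hae' : (fun p : Ω × X => (p.1, S t s p.1 p.2))
        =ᵐ[ℙ.map (fun ω => (ω, a s ω))] (fun p => (p.1, S' t s p.1 p.2)) := by
      rw [Filter.EventuallyEq, ae_iff]
      apply measure_mono_null _ hnull
      intro p hp
      simp only [Set.mem_setOf_eq] at hp
      by_contra hP
      simp only [Set.mem_preimage, Set.mem_compl_iff, not_not] at hP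
      apply hp
      rw [hS'eq_on t s p.1 hP hst]
    calc (ℙ.map (fun ω => (ω, a s ω))).map (fun p : Ω × X => (p.1, S t s p.1 p.2))
        = (ℙ.map (fun ω => (ω, a s ω))).map (fun p : Ω × X => (p.1, S' t s p.1 p.2)) :=
          Measure.map_congr hae'
      _ = ℙ.map ((fun p : Ω × X => (p.1, S' t s p.1 p.2)) ∘ (fun ω => (ω, a s ω))) :=
          Measure.map_map hf' (hgm s)
      _ = ℙ.map (fun ω => (ω, a t ω)) := by
          congr 1
          funext ω
          show (ω, S' t s ω (a s ω)) = (ω, a t ω)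
          rw [hacoc s t hst ω]
  · -- κ probability
    intro t ω
    infer_instance
  · -- κ measurable
    intro t D hD
    have : (fun ω => (Measure.dirac (a t ω)) D) = fun ω => D.indicator 1 (a t ω) := by
      funext ω
      exact Measure.dirac_apply' _ hD
    rw [this]
    exact (measurable_one.indicator hD).comp (hameas t)
  · -- product formula
    intro t F D hF hD
    rw [Measure.map_apply (hgm t) (hF.prod hD)]
    have hpre : ((fun ω => (ω, a t ω)) ⁻¹' (F ×ˢ D)) = F ∩ (a t) ⁻¹' D := by
      ext ω
      simp [Set.mem_prod]
    rw [hpre]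
    have hind : ∀ ω, (Measure.dirac (a t ω)) D = Set.indicator ((a t) ⁻¹' D) 1 ω := by
      intro ω
      rw [Measure.dirac_apply' _ hD]
      simp only [Set.indicator_apply, Set.mem_preimage, Pi.one_apply]
    calc ℙ (F ∩ (a t) ⁻¹' D) = ℙ ((a t) ⁻¹' D ∩ F) := by rw [Set.inter_comm]
      _ = (ℙ.restrict F) ((a t) ⁻¹' D) := (Measure.restrict_apply ((hameas t) hD)).symm
      _ = ∫⁻ ω in F, Set.indicator ((a t) ⁻¹' D) 1 ω ∂ℙ :=
          (lintegral_indicator_one ((hameas t) hD)).symm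
      _ = ∫⁻ ω in F, (Measure.dirac (a t ω)) D ∂ℙ := by
          apply lintegral_congr
          intro ω
          rw [hind ω]
  · -- support
    intro t
    filter_upwards [hΩ₁ae] with ω hω
    exact Measure.dirac_apply_of_mem (hamem t ω hω)
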